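/- Avoidance of lightlike singularities: Equip ℝ³ with the Minkowski bilinear form ⟨x, y⟩_L = x₁y₁ + x₂y₂ − x₃y₃. Let f : ℝ² → ℝ be twice continuously differentiable with f(0,0) = 0, f_u(0,0) = 1, f_v(0,0) = 0 (so the tangent plane of the graph of f at the origin is lightlike). Let θ ∈ ℝ with sin θ ≠ 0, let T > 0, and let u, v : [0, T] → ℝ be continuously differentiable on [0, T] and twice differentiable on (0, T], with u(0) = v(0) = 0, u'(0) = cos θ, v'(0) = sin θ. Set γ(t) = (u(t), v(t), f(u(t), v(t))) and along the curve write R = f_{uu} u'² + 2 f_{uv} u' v' + f_{vv} v'² and h⁻¹ = 1 − f_u² − f_v², all evaluated at (u(t), v(t)). Assume: (i) h⁻¹(t) > 0 for t ∈ (0, T] (spacelike tangent planes along the curve); (ii) ⟨γ'(t), γ'(t)⟩_L = sin²θ for all t ∈ (0, T] (constant speed); and (iii) the quantity 𝒯(t) = √(h⁻¹) · (u' v'' − v' u'') + (1/√(h⁻¹)) · R · (v' f_u − u' f_v) is bounded on (0, T] (bounded geodesic curvature). Then f_{uu}(0,0) cos²θ + 2 f_{uv}(0,0) cos θ sin θ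 + f_{vv}(0,0) sin²θ = 0. -/

import Mathlib

open Real Set

/-- A function bounded on `(0,b]` cannot have derivative ≥ κ/t there. -/
lemma aux_no_big_deriv (b Mb κ : ℝ) (hb : 0 < b) (hκ : 0 < κ)
    (N : ℝ → ℝ) (hNc : ContinuousOn N (Set.Ioc 0 b))
    (hNb : ∀ t ∈ Set.Ioc 0 b, |N t| ≤ Mb)
    (hN' : ∀ t ∈ Set.Ioo 0 b, ∃ d, HasDerivAt N d t ∧ κ / t ≤ d) : False := by
  have hMb : 0 ≤ Mb := (abs_nonneg _).trans (hNb b ⟨hb, le_refl b⟩)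
  -- choose ε
  set X : ℝ := (2 * Mb + κ * |Real.log b| + 1) / κ with hX
  set ε : ℝ := min (b/2) (Real.exp (-X)) with hε
  have hε0 : 0 < ε := lt_min (by linarith) (Real.exp_pos _)
  have hεb : ε < b := lt_of_le_of_lt (min_le_left _ _) (by linarith)
  have hlogε : Real.log ε ≤ -X := by
    calc Real.log ε ≤ Real.log (Real.exp (-X)) :=
          Real.log_le_log hε0 (min_le_right _ _)
      _ = -X := Real.log_exp _
  -- the comparison function
  set F : ℝ → ℝ := fun t => N t - κ * Real.log t with hF
  have hmono : MonotoneOn F (Set.Icc ε b) := by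
    apply monotoneOn_of_deriv_nonneg (convex_Icc _ _)
    · apply ContinuousOn.sub (hNc.mono ?_)
      · exact ContinuousOn.mul continuousOn_const
          (Real.continuousOn_log.mono (fun x hx => ne_of_gt (lt_of_lt_of_le hε0 hx.1)))
      · exact fun x hx => ⟨lt_of_lt_of_le hε0 hx.1, hx.2⟩
    · intro x hx
      rw [interior_Icc] at hx
      obtain ⟨d, hd, hdg⟩ := hN' x ⟨lt_trans hε0 hx.1, hx.2⟩
      exact ((hd.sub ((Real.hasDerivAt_log (ne_of_gt (lt_trans hε0 hx.1))).const_mul κ)).differentiableAt).differentiableWithinAt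
    · intro x hx
      rw [interior_Icc] at hx
      have hx0 : 0 < x := lt_trans hε0 hx.1
      obtain ⟨d, hd, hdg⟩ := hN' x ⟨hx0, hx.2⟩
      have hFd : HasDerivAt F (d - κ * x⁻¹) x :=
        hd.sub ((Real.hasDerivAt_log (ne_of_gt hx0)).const_mul κ)
      rw [hFd.deriv]
      have : κ * x⁻¹ = κ / x := by ring
      rw [this]; linarith
  have hle : F ε ≤ F b := hmono ⟨le_refl ε, le_of_lt hεb⟩ ⟨le_of_lt hεb, le_refl b⟩ (le_of_lt hεb)
  have h1 : |N ε| ≤ Mb := hNb ε ⟨hε0, le_of_lt hεb⟩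
  have h2 : |N b| ≤ Mb := hNb b ⟨hb, le_refl b⟩
  have h3 : -(κ * Real.log b) ≤ κ * |Real.log b| := by
    have hna : -Real.log b ≤ |Real.log b| := neg_le_abs _
    calc -(κ * Real.log b) = κ * (-Real.log b) := by ring
      _ ≤ κ * |Real.log b| := mul_le_mul_of_nonneg_left hna hκ.le
  have h4 : -Real.log ε ≥ X := by linarith
  have h5 : κ * X ≤ -(κ * Real.log ε) := by
    have := mul_le_mul_of_nonneg_left h4 hκ.le
    linarith [this]
  have h6 : κ * X = 2 * Mb + κ * |Real.log b| + 1 := by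
    rw [hX, mul_div_assoc']; exact mul_div_cancel_left₀ _ hκ.ne'
  obtain ⟨hb1, hb2⟩ := abs_le.1 h1
  obtain ⟨hb3, hb4⟩ := abs_le.1 h2
  simp only [hF] at hle
  linarith

set_option maxHeartbeats 2000000 in

/-- Theorem 3.1 (avoidance of lightlike singularities): let the graph of `f` in
Minkowski 3-space have a lightlike tangent plane at the origin
(`f (0,0) = 0`, `f_u (0,0) = 1`, `f_v (0,0) = 0`), and let
`γ (t) = (u t, v t, f (u t, v t))` be a curve reaching the origin at `t = 0` with
direction `(cos θ, sin θ)`, `sin θ ≠ 0`, which for `t ∈ (0, T]` has spacelike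
tangent planes, constant Minkowski speed `sin²θ`, and bounded
geodesic-curvature quantity `𝒯`. Then the incoming direction annihilates the
Hessian quadratic form:
`f_uu (0,0) cos²θ + 2 f_uv (0,0) cos θ sin θ + f_vv (0,0) sin²θ = 0`. -/
theorem lightlike_singularity_direction_condition
    (f : ℝ × ℝ → ℝ) (hf : ContDiff ℝ 2 f)
    (fu fv fuu fuv fvv : ℝ × ℝ → ℝ)
    (hfu : ∀ p, fu p = fderiv ℝ f p (1, 0))
    (hfv : ∀ p, fv p = fderiv ℝ f p (0, 1))
    (hfuu : ∀ p, fuu p = fderiv ℝ fu p (1, 0))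
    (hfuv : ∀ p, fuv p = fderiv ℝ fu p (0, 1))
    (hfvv : ∀ p, fvv p = fderiv ℝ fv p (0, 1))
    (hf0 : f (0, 0) = 0) (hfu0 : fu (0, 0) = 1) (hfv0 : fv (0, 0) = 0)
    (θ : ℝ) (hθ : Real.sin θ ≠ 0) (T : ℝ) (hT : 0 < T)
    (u v u' v' u'' v'' : ℝ → ℝ)
    (hu : ∀ t ∈ Set.Icc 0 T, HasDerivWithinAt u (u' t) (Set.Icc 0 T) t)
    (hv : ∀ t ∈ Set.Icc 0 T, HasDerivWithinAt v (v' t) (Set.Icc 0 T) t)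
    (hu'c : ContinuousOn u' (Set.Icc 0 T))
    (hv'c : ContinuousOn v' (Set.Icc 0 T))
    (hu' : ∀ t ∈ Set.Ioc 0 T, HasDerivAt u' (u'' t) t)
    (hv' : ∀ t ∈ Set.Ioc 0 T, HasDerivAt v' (v'' t) t)
    (hu0 : u 0 = 0) (hv0 : v 0 = 0)
    (hu'0 : u' 0 = Real.cos θ) (hv'0 : v' 0 = Real.sin θ)
    -- (i) spacelike tangent planes along the curve: `h⁻¹ = 1 − f_u² − f_v² > 0`
    (hspace : ∀ t ∈ Set.Ioc 0 T,
      0 < 1 - fu (u t, v t) ^ 2 - fv (u t, v t) ^ 2)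
    -- (ii) constant Minkowski speed: `⟨γ', γ'⟩_L = sin²θ`
    (hspeed : ∀ t ∈ Set.Ioc 0 T,
      u' t ^ 2 + v' t ^ 2
        - (fu (u t, v t) * u' t + fv (u t, v t) * v' t) ^ 2 = Real.sin θ ^ 2)
    -- (iii) bounded geodesic curvature quantity `𝒯`
    (Cb : ℝ)
    (hbound : ∀ t ∈ Set.Ioc 0 T,
      |Real.sqrt (1 - fu (u t, v t) ^ 2 - fv (u t, v t) ^ 2)
          * (u' t * v'' t - v' t * u'' t)
        + (1 / Real.sqrt (1 - fu (u t, v t) ^ 2 - fv (u t, v t) ^ 2))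
          * (fuu (u t, v t) * u' t ^ 2 + 2 * fuv (u t, v t) * u' t * v' t
              + fvv (u t, v t) * v' t ^ 2)
          * (v' t * fu (u t, v t) - u' t * fv (u t, v t))| ≤ Cb) :
    fuu (0, 0) * Real.cos θ ^ 2 + 2 * fuv (0, 0) * Real.cos θ * Real.sin θ
      + fvv (0, 0) * Real.sin θ ^ 2 = 0 := by
  by_contra hQ0
  set c := Real.cos θ with hcdef
  set s := Real.sin θ with hsdef
  set Q := fuu (0, 0) * c ^ 2 + 2 * fuv (0, 0) * c * s + fvv (0, 0) * s ^ 2 with hQdef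
  have h0T : (0:ℝ) ∈ Set.Icc 0 T := ⟨le_refl 0, le_of_lt hT⟩
  -- basic smoothness
  have hfuC : ContDiff ℝ 1 fu := by
    have : fu = fun p => fderiv ℝ f p (1, 0) := funext hfu
    rw [this]
    exact (hf.fderiv_right (by norm_num)).clm_apply contDiff_const
  have hfvC : ContDiff ℝ 1 fv := by
    have : fv = fun p => fderiv ℝ f p (0, 1) := funext hfv
    rw [this]
    exact (hf.fderiv_right (by norm_num)).clm_apply contDiff_const
  have hfuuC : Continuous fuu := by
    have : fuu = fun p => fderiv ℝ fu p (1, 0) := funext hfuu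
    rw [this]
    exact (hfuC.continuous_fderiv (by norm_num)).clm_apply continuous_const
  have hfuvC : Continuous fuv := by
    have : fuv = fun p => fderiv ℝ fu p (0, 1) := funext hfuv
    rw [this]
    exact (hfuC.continuous_fderiv (by norm_num)).clm_apply continuous_const
  have hfvvC : Continuous fvv := by
    have : fvv = fun p => fderiv ℝ fv p (0, 1) := funext hfvv
    rw [this]
    exact (hfvC.continuous_fderiv (by norm_num)).clm_apply continuous_const
  -- continuity along the curve
  have huc : ContinuousOn u (Set.Icc 0 T) := fun t ht => (hu t ht).continuousWithinAt
  have hvc : ContinuousOn v (Set.Icc 0 T) := fun t ht => (hv t ht).continuousWithinAt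
  have hγc : ContinuousOn (fun t => (u t, v t)) (Set.Icc 0 T) := huc.prodMk hvc
  have hAc : ContinuousOn (fun t => fu (u t, v t)) (Set.Icc 0 T) :=
    hfuC.continuous.comp_continuousOn hγc
  have hBc : ContinuousOn (fun t => fv (u t, v t)) (Set.Icc 0 T) :=
    hfvC.continuous.comp_continuousOn hγc
  have hgc : ContinuousOn (fun t => 1 - fu (u t, v t) ^ 2 - fv (u t, v t) ^ 2)
      (Set.Icc 0 T) := ((continuousOn_const.sub (hAc.pow 2)).sub (hBc.pow 2))
  -- the "eventually near 0" extraction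
  have key : ∀ F : ℝ → ℝ, ContinuousOn F (Set.Icc 0 T) → ∀ ε > (0:ℝ),
      ∃ δ > (0:ℝ), ∀ t ∈ Set.Ioc 0 T, t ≤ δ → |F t - F 0| < ε := by
    intro F hF ε hε
    have h0 := (hF 0 h0T).tendsto
    rw [Metric.tendsto_nhdsWithin_nhds] at h0
    obtain ⟨δ, hδ, h⟩ := h0 ε hε
    refine ⟨δ / 2, by linarith, fun t ht htδ => ?_⟩
    have := h (x := t) ⟨le_of_lt ht.1, ht.2⟩ (by
      rw [Real.dist_eq, abs_of_nonneg (by linarith [ht.1.le] : (0:ℝ) ≤ t - 0)]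
      linarith)
    rwa [Real.dist_eq] at this
  -- Step 2: linear bound on g near 0
  obtain ⟨C, hCpos, δ₁, hδ₁, hglin⟩ :
      ∃ C > (0:ℝ), ∃ δ₁ > (0:ℝ), ∀ t ∈ Set.Ioc 0 T, t ≤ δ₁ →
        1 - fu (u t, v t) ^ 2 - fv (u t, v t) ^ 2 ≤ C * t := by
    have huv0 : HasDerivWithinAt (fun t => (u t, v t)) (c, s) (Set.Icc 0 T) 0 := by
      have := (hu 0 h0T).prodMk (hv 0 h0T)
      rwa [hu'0, hv'0] at this
    have hA0 : HasDerivWithinAt (fun t => fu (u t, v t))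
        (fderiv ℝ fu (0, 0) (c, s)) (Set.Icc 0 T) 0 := by
      have hdiff : DifferentiableAt ℝ fu (u 0, v 0) :=
        (hfuC.differentiable (by norm_num)).differentiableAt
      have h2 := hdiff.hasFDerivAt.comp_hasDerivWithinAt 0 huv0
      rw [hu0, hv0] at h2
      exact h2
    have hB0 : HasDerivWithinAt (fun t => fv (u t, v t))
        (fderiv ℝ fv (0, 0) (c, s)) (Set.Icc 0 T) 0 := by
      have hdiff : DifferentiableAt ℝ fv (u 0, v 0) :=
        (hfvC.differentiable (by norm_num)).differentiableAt
      have h2 := hdiff.hasFDerivAt.comp_hasDerivWithinAt 0 huv0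
      rw [hu0, hv0] at h2
      exact h2
    obtain ⟨L, hg0⟩ : ∃ L, HasDerivWithinAt
        (fun t => 1 - fu (u t, v t) ^ 2 - fv (u t, v t) ^ 2) L (Set.Icc 0 T) 0 :=
      ⟨_, ((hasDerivWithinAt_const (0:ℝ) (Set.Icc 0 T) (1:ℝ)).sub (hA0.pow 2)).sub
        (hB0.pow 2)⟩
    rw [hasDerivWithinAt_iff_tendsto_slope, Metric.tendsto_nhdsWithin_nhds] at hg0
    obtain ⟨δ, hδ, hsl⟩ := hg0 1 one_pos
    refine ⟨|L| + 1, by positivity, δ / 2, by linarith, fun t ht htδ => ?_⟩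
    have htm : t ∈ Set.Icc 0 T \ {0} :=
      ⟨⟨le_of_lt ht.1, ht.2⟩, by simp [ne_of_gt ht.1]⟩
    have hdist : dist t 0 < δ := by
      rw [Real.dist_eq, sub_zero, abs_of_pos ht.1]; linarith
    have hsl2 := hsl htm hdist
    rw [Real.dist_eq] at hsl2
    have hslope : |(1 - fu (u t, v t) ^ 2 - fv (u t, v t) ^ 2) / t - L| < 1 := by
      have e : slope (fun t => 1 - fu (u t, v t) ^ 2 - fv (u t, v t) ^ 2) 0 t
          = (1 - fu (u t, v t) ^ 2 - fv (u t, v t) ^ 2) / t := by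
        have hfu0' : fu 0 = 1 := hfu0
        have hfv0' : fv 0 = 0 := hfv0
        rw [slope_def_field]
        simp [hu0, hv0, hfu0', hfv0', hfu0, hfv0]
      rwa [e] at hsl2
    have h1 := (abs_lt.1 hslope).2
    have h2 : (1 - fu (u t, v t) ^ 2 - fv (u t, v t) ^ 2) / t < |L| + 1 := by
      linarith [le_abs_self L]
    have := (div_lt_iff₀ ht.1).1 h2
    linarith
  -- sign bookkeeping
  have hQne : Q ≠ 0 := hQ0
  set q : ℝ := |Q * s| with hqdef
  have hq : 0 < q := abs_pos.2 (mul_ne_zero hQne hθ)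
  set σ : ℝ := if 0 ≤ Q * s then 1 else -1 with hσdef
  have hσ1 : σ = 1 ∨ σ = -1 := by unfold σ; split_ifs <;> simp
  have hσQs : Q * s = σ * q := by
    unfold σ q
    split_ifs with h
    · rw [abs_of_nonneg h]; ring
    · rw [abs_of_neg (not_le.1 h)]; ring
  have hσabs : |σ| = 1 := by rcases hσ1 with h | h <;> simp [h]
  set Cb' : ℝ := max Cb 1 with hCb'def
  have hCb' : 0 < Cb' := lt_of_lt_of_le one_pos (le_max_right _ _)
  -- Step 3: the small-time regime
  obtain ⟨t₂, ht₂0, ht₂T, hfacts⟩ :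
      ∃ t₂, 0 < t₂ ∧ t₂ ≤ T ∧ ∀ t ∈ Set.Ioc 0 t₂,
        t ∈ Set.Ioc 0 T ∧
        (1 - fu (u t, v t) ^ 2 - fv (u t, v t) ^ 2 ≤ C * t) ∧
        (q / 2 ≤ σ * ((fuu (u t, v t) * u' t ^ 2 + 2 * fuv (u t, v t) * u' t * v' t
              + fvv (u t, v t) * v' t ^ 2)
            * (v' t * fu (u t, v t) - u' t * fv (u t, v t)))) ∧
        (1/2 < c * u' t + s * v' t ∧ c * u' t + s * v' t < 3/2) ∧
        (|u' t| ≤ 2 ∧ |v' t| ≤ 2) ∧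
        (Real.sqrt (1 - fu (u t, v t) ^ 2 - fv (u t, v t) ^ 2) ≤ q / (4 * Cb')) := by
    have hpy : s ^ 2 + c ^ 2 = 1 := by
      rw [hsdef, hcdef]; exact Real.sin_sq_add_cos_sq θ
    have hRMc : ContinuousOn (fun t =>
        (fuu (u t, v t) * u' t ^ 2 + 2 * fuv (u t, v t) * u' t * v' t
            + fvv (u t, v t) * v' t ^ 2)
          * (v' t * fu (u t, v t) - u' t * fv (u t, v t))) (Set.Icc 0 T) := by
      apply ContinuousOn.mul
      · exact (((hfuuC.comp_continuousOn hγc).mul (hu'c.pow 2)).add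
          (((continuousOn_const.mul (hfuvC.comp_continuousOn hγc)).mul hu'c).mul
            hv'c)).add ((hfvvC.comp_continuousOn hγc).mul (hv'c.pow 2))
      · exact (hv'c.mul hAc).sub (hu'c.mul hBc)
    have hDc : ContinuousOn (fun t => c * u' t + s * v' t) (Set.Icc 0 T) :=
      (continuousOn_const.mul hu'c).add (continuousOn_const.mul hv'c)
    obtain ⟨δ₂, hδ₂, hRMev⟩ := key _ hRMc (q / 2) (half_pos hq)
    obtain ⟨δ₃, hδ₃, hDev⟩ := key _ hDc (1 / 2) (by norm_num)
    obtain ⟨δ₄, hδ₄, huev⟩ := key u' hu'c 1 one_pos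
    obtain ⟨δ₅, hδ₅, hvev⟩ := key v' hv'c 1 one_pos
    obtain ⟨δ₆, hδ₆, hgev⟩ := key _ hgc ((q / (4 * Cb')) ^ 2) (pow_pos (div_pos hq (by linarith)) 2)
    refine ⟨min T (min δ₁ (min δ₂ (min δ₃ (min δ₄ (min δ₅ δ₆))))),
      lt_min hT (lt_min hδ₁ (lt_min hδ₂ (lt_min hδ₃ (lt_min hδ₄ (lt_min hδ₅ hδ₆))))),
      min_le_left _ _, ?_⟩
    intro t ht
    obtain ⟨ht0, htm⟩ := ht
    simp only [le_min_iff] at htm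
    have htT : t ∈ Set.Ioc 0 T := ⟨ht0, htm.1⟩
    refine ⟨htT, hglin t htT htm.2.1, ?_, ⟨?_, ?_⟩, ⟨?_, ?_⟩, ?_⟩
    · have h := hRMev t htT htm.2.2.1
      have hRM0 : (fuu (u 0, v 0) * u' 0 ^ 2 + 2 * fuv (u 0, v 0) * u' 0 * v' 0
          + fvv (u 0, v 0) * v' 0 ^ 2)
          * (v' 0 * fu (u 0, v 0) - u' 0 * fv (u 0, v 0)) = Q * s := by
        rw [hu0, hv0, hu'0, hv'0, hfu0, hfv0, hQdef]; ring
      rw [hRM0, hσQs] at h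
      obtain ⟨ha, hb⟩ := abs_lt.1 h
      rcases hσ1 with hσ | hσ <;> rw [hσ] at ha hb ⊢ <;> linarith
    · have h := hDev t htT htm.2.2.2.1
      have hD0 : c * u' 0 + s * v' 0 = 1 := by
        rw [hu'0, hv'0]; linear_combination hpy
      rw [hD0] at h
      obtain ⟨ha, hb⟩ := abs_lt.1 h
      linarith
    · have h := hDev t htT htm.2.2.2.1
      have hD0 : c * u' 0 + s * v' 0 = 1 := by
        rw [hu'0, hv'0]; linear_combination hpy
      rw [hD0] at h
      obtain ⟨ha, hb⟩ := abs_lt.1 h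
      linarith
    · have h := huev t htT htm.2.2.2.2.1
      rw [hu'0] at h
      have h2 := abs_sub_abs_le_abs_sub (u' t) c
      have hc1 : |c| ≤ 1 := by rw [hcdef]; exact Real.abs_cos_le_one θ
      linarith
    · have h := hvev t htT htm.2.2.2.2.2.1
      rw [hv'0] at h
      have h2 := abs_sub_abs_le_abs_sub (v' t) s
      have hs1 : |s| ≤ 1 := by rw [hsdef]; exact Real.abs_sin_le_one θ
      linarith
    · have h := hgev t htT htm.2.2.2.2.2.2
      have hg00 : 1 - fu (u 0, v 0) ^ 2 - fv (u 0, v 0) ^ 2 = 0 := by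
        rw [hu0, hv0, hfu0, hfv0]; norm_num
      rw [hg00, sub_zero] at h
      calc Real.sqrt (1 - fu (u t, v t) ^ 2 - fv (u t, v t) ^ 2)
          ≤ Real.sqrt ((q / (4 * Cb')) ^ 2) :=
            Real.sqrt_le_sqrt (le_trans (le_abs_self _) h.le)
        _ = q / (4 * Cb') := Real.sqrt_sq (le_of_lt (div_pos hq (by linarith)))
  -- Step 4: the geodesic-curvature estimate forces fast rotation
  have hK : ∀ t ∈ Set.Ioc 0 t₂,
      σ * (u' t * v'' t - v' t * u'' t) ≤ -((q / (4 * C)) / t) := by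
    intro t ht
    obtain ⟨htT, hgC, hRMt, ⟨hD1, hD2⟩, ⟨hu2, hv2⟩, hWle⟩ := hfacts t ht
    have hgpos := hspace t htT
    set gt := 1 - fu (u t, v t) ^ 2 - fv (u t, v t) ^ 2 with hgt
    set W := Real.sqrt gt with hWdef
    have hWpos : 0 < W := Real.sqrt_pos.2 hgpos
    have hWne : W ≠ 0 := ne_of_gt hWpos
    have hW2 : W ^ 2 = gt := Real.sq_sqrt (le_of_lt hgpos)
    set K := u' t * v'' t - v' t * u'' t with hKdef
    set RM := (fuu (u t, v t) * u' t ^ 2 + 2 * fuv (u t, v t) * u' t * v' t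
        + fvv (u t, v t) * v' t ^ 2)
        * (v' t * fu (u t, v t) - u' t * fv (u t, v t)) with hRMdef
    have hb' : |W * K + 1 / W * RM| ≤ Cb := by
      have hb := hbound t htT
      have e : W * K + 1 / W * RM
          = Real.sqrt (1 - fu (u t, v t) ^ 2 - fv (u t, v t) ^ 2)
              * (u' t * v'' t - v' t * u'' t)
            + 1 / Real.sqrt (1 - fu (u t, v t) ^ 2 - fv (u t, v t) ^ 2)
              * (fuu (u t, v t) * u' t ^ 2 + 2 * fuv (u t, v t) * u' t * v' t
                  + fvv (u t, v t) * v' t ^ 2)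
              * (v' t * fu (u t, v t) - u' t * fv (u t, v t)) := by
        rw [hRMdef, hKdef, hWdef, hgt]; ring
      rw [e]
      exact hb
    have h1 : σ * (W * K + 1 / W * RM) ≤ Cb := by
      calc σ * (W * K + 1 / W * RM) ≤ |σ * (W * K + 1 / W * RM)| := le_abs_self _
        _ = |W * K + 1 / W * RM| := by rw [abs_mul, hσabs, one_mul]
        _ ≤ Cb := hb'
    have hCbW : Cb ≤ q / (4 * W) := by
      rw [le_div_iff₀ (by linarith : (0:ℝ) < 4 * W)]
      have h2 : W * (4 * Cb') ≤ q := by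
        have := (le_div_iff₀ (by linarith : (0:ℝ) < 4 * Cb')).1 hWle
        linarith
      have h3 : Cb ≤ Cb' := le_max_left _ _
      have h4 : Cb * (4 * W) ≤ Cb' * (4 * W) :=
        mul_le_mul_of_nonneg_right h3 (by linarith)
      have h5 : Cb' * (4 * W) = W * (4 * Cb') := by ring
      linarith
    have hRMW : q / 2 / W ≤ σ * RM / W :=
      div_le_div_of_nonneg_right hRMt hWpos.le
    have e1 : σ * (W * K + 1 / W * RM) = σ * (W * K) + σ * RM / W := by
      ring
    have e2 : q / (4 * W) - q / 2 / W = -(q / (4 * W)) := by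
      ring
    have h3 : σ * (W * K) ≤ -(q / (4 * W)) := by
      rw [← e2]
      have := e1 ▸ h1
      linarith
    have h4 : σ * K ≤ -(q / (4 * gt)) := by
      have hdl := div_le_div_of_nonneg_right h3 hWpos.le
      have ea : σ * (W * K) / W = σ * K := by
        rw [mul_comm W K, ← mul_assoc, mul_div_cancel_right₀ _ hWne]
      have eb : -(q / (4 * W)) / W = -(q / (4 * gt)) := by
        rw [← hW2]; ring
      rw [ea, eb] at hdl
      exact hdl
    have h5 : (q / (4 * C)) / t ≤ q / (4 * gt) := by
      rw [div_div]
      exact div_le_div_of_nonneg_left hq.le (by linarith) (by linarith)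
    linarith
  -- Step 5: contradiction via the bounded-rotation lemma
  have hsub : Set.Ioc 0 t₂ ⊆ Set.Icc 0 T := fun x hx => ⟨le_of_lt hx.1, le_trans hx.2 ht₂T⟩
  refine aux_no_big_deriv t₂ 8 (q / (16 * C)) ht₂0 (div_pos hq (by linarith))
    (fun t => σ * ((s * u' t - c * v' t) / (c * u' t + s * v' t))) ?_ ?_ ?_
  · apply ContinuousOn.mul continuousOn_const
    apply ContinuousOn.div
    · exact (continuousOn_const.mul (hu'c.mono hsub)).sub
        (continuousOn_const.mul (hv'c.mono hsub))
    · exact (continuousOn_const.mul (hu'c.mono hsub)).add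
        (continuousOn_const.mul (hv'c.mono hsub))
    · intro x hx
      exact ne_of_gt (lt_trans (by norm_num) (hfacts x hx).2.2.2.1.1)
  · intro t ht
    obtain ⟨htT, hgC, hRMt, ⟨hD1, hD2⟩, ⟨hu2, hv2⟩, hWle⟩ := hfacts t ht
    have hc1 : |c| ≤ 1 := by rw [hcdef]; exact Real.abs_cos_le_one θ
    have hs1 : |s| ≤ 1 := by rw [hsdef]; exact Real.abs_sin_le_one θ
    have h1 : |s * u' t| ≤ 2 := by
      rw [abs_mul]
      calc |s| * |u' t| ≤ 1 * 2 := mul_le_mul hs1 hu2 (abs_nonneg _) zero_le_one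
        _ = 2 := by norm_num
    have h2 : |c * v' t| ≤ 2 := by
      rw [abs_mul]
      calc |c| * |v' t| ≤ 1 * 2 := mul_le_mul hc1 hv2 (abs_nonneg _) zero_le_one
        _ = 2 := by norm_num
    have hnum : |s * u' t - c * v' t| ≤ 4 := by
      calc |s * u' t - c * v' t| ≤ |s * u' t| + |c * v' t| := abs_sub _ _
        _ ≤ 4 := by linarith
    have hDpos : 0 < c * u' t + s * v' t := lt_trans (by norm_num) hD1
    rw [abs_mul, hσabs, one_mul, abs_div, abs_of_pos hDpos]
    calc |s * u' t - c * v' t| / (c * u' t + s * v' t) ≤ 4 / (1 / 2) :=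
          div_le_div₀ (by norm_num) hnum (by norm_num) (le_of_lt hD1)
      _ = 8 := by norm_num
  · intro t ht
    have htmem : t ∈ Set.Ioc 0 t₂ := ⟨ht.1, le_of_lt ht.2⟩
    obtain ⟨htT, hgC, hRMt, ⟨hD1, hD2⟩, ⟨hu2, hv2⟩, hWle⟩ := hfacts t htmem
    have hpy : s ^ 2 + c ^ 2 = 1 := by
      rw [hsdef, hcdef]; exact Real.sin_sq_add_cos_sq θ
    have hDpos : 0 < c * u' t + s * v' t := lt_trans (by norm_num) hD1
    have hDne : c * u' t + s * v' t ≠ 0 := ne_of_gt hDpos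
    have hNum : HasDerivAt (fun r => s * u' r - c * v' r) (s * u'' t - c * v'' t) t :=
      ((hu' t htT).const_mul s).sub ((hv' t htT).const_mul c)
    have hDen : HasDerivAt (fun r => c * u' r + s * v' r) (c * u'' t + s * v'' t) t :=
      ((hu' t htT).const_mul c).add ((hv' t htT).const_mul s)
    have hdiv := (hNum.div hDen hDne).const_mul σ
    refine ⟨_, hdiv, ?_⟩
    have hKt := hK t htmem
    have hD2le : (c * u' t + s * v' t) ^ 2 ≤ 4 := by
      rw [sq]
      calc (c * u' t + s * v' t) * (c * u' t + s * v' t)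
          ≤ (3/2) * (3/2) := mul_le_mul hD2.le hD2.le hDpos.le (by norm_num)
        _ ≤ 4 := by norm_num
    have hD2pos : (0:ℝ) < (c * u' t + s * v' t) ^ 2 := pow_pos hDpos 2
    have hnum2 : (s * u'' t - c * v'' t) * (c * u' t + s * v' t)
        - (s * u' t - c * v' t) * (c * u'' t + s * v'' t)
        = -(u' t * v'' t - v' t * u'' t) := by
      linear_combination (-(u' t * v'' t - v' t * u'' t)) * hpy
    have ed : σ * (((s * u'' t - c * v'' t) * (c * u' t + s * v' t)
          - (s * u' t - c * v' t) * (c * u'' t + s * v'' t))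
            / (c * u' t + s * v' t) ^ 2)
        = -(σ * (u' t * v'' t - v' t * u'' t)) / (c * u' t + s * v' t) ^ 2 := by
      rw [hnum2]; ring
    rw [ed]
    have hCne : C ≠ 0 := ne_of_gt hCpos
    have htne : t ≠ 0 := ne_of_gt ht.1
    have e : q / (16 * C) / t = ((q / (4 * C)) / t) / 4 := by
      ring
    have hP : (0:ℝ) < (q / (4 * C)) / t := div_pos (div_pos hq (by linarith)) ht.1
    have hstep2 : ((q / (4 * C)) / t) / 4 ≤ ((q / (4 * C)) / t) / (c * u' t + s * v' t) ^ 2 :=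
      div_le_div_of_nonneg_left hP.le hD2pos hD2le
    have hstep3 : ((q / (4 * C)) / t) / (c * u' t + s * v' t) ^ 2
        ≤ (-(σ * (u' t * v'' t - v' t * u'' t))) / (c * u' t + s * v' t) ^ 2 :=
      div_le_div_of_nonneg_right (by linarith) hD2pos.le
    rw [e]
    exact le_trans hstep2 hstep3
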